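/- Let K be a separable real Hilbert space, M a real Hilbert space, m a sub-σ-algebra of 𝓕, Y : Ω → K Bochner integrable, φ : Ω → M an m-measurable Bochner integrable random element with mean μ_X = E[φ], and B₀ : K → M a bounded linear operator with Hilbert adjoint B₀* : M → K. Suppose that for every g ∈ K, E[⟨g, Y⟩ | m] = ⟨B₀ g, φ − μ_X⟩ + E[⟨g, Y⟩] almost surely. Then E[Y | m] = B₀*(φ − μ_X) + E[Y] almost surely, as an identity of K-valued random elements. -/

import Mathlib

open MeasureTheory RealInnerProductSpace

/-- Proposition 2 of the paper (abstract form): if for every `g ∈ K` the conditional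
expectation of `⟨g, Y⟩` given `m` equals `⟨B₀ g, φ − μ_X⟩ + E[⟨g, Y⟩]` a.s., then
`E[Y | m] = B₀*(φ − μ_X) + E[Y]` a.s. as `K`-valued random elements. -/
theorem stmt3
    {Ω : Type*} [F : MeasurableSpace Ω] (P : Measure Ω) [IsProbabilityMeasure P]
    {M K : Type*}
    [NormedAddCommGroup M] [InnerProductSpace ℝ M] [CompleteSpace M]
    [NormedAddCommGroup K] [InnerProductSpace ℝ K] [CompleteSpace K]
    [TopologicalSpace.SeparableSpace K]
    (m : MeasurableSpace Ω) (hm : m ≤ F)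
    (Y : Ω → K) (hY : Integrable Y P)
    (φ : Ω → M) (hφm : StronglyMeasurable[m] φ) (hφ : Integrable φ P)
    (μX : M) (hμX : μX = ∫ ω, φ ω ∂P)
    (B₀ : K →L[ℝ] M)
    (h : ∀ g : K,
      P[fun ω => ⟪g, Y ω⟫|m]
        =ᵐ[P] fun ω => ⟪B₀ g, φ ω - μX⟫ + ∫ ω', ⟪g, Y ω'⟫ ∂P) :
    P[Y|m]
      =ᵐ[P] fun ω =>
        (ContinuousLinearMap.adjoint B₀) (φ ω - μX) + ∫ ω', Y ω' ∂P := by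
  letI : MeasurableSpace Ω := F
  set A := ContinuousLinearMap.adjoint B₀ with hA
  set Z : Ω → K := fun ω => A (φ ω - μX) + ∫ ω', Y ω' ∂P with hZ
  have hφ' : Integrable (fun ω => φ ω - μX) P := hφ.sub (integrable_const μX)
  have hZint : Integrable Z P :=
    (A.integrable_comp hφ').add (integrable_const _)
  have hZm : StronglyMeasurable[m] Z := by
    exact (A.continuous.comp_stronglyMeasurable
      (hφm.sub stronglyMeasurable_const)).add stronglyMeasurable_const
  refine (ae_eq_condExp_of_forall_setIntegral_eq hm hY
    (fun s _ _ => hZint.integrableOn (μ := P)) (fun s hs hμs => ?_)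
    hZm.aestronglyMeasurable).symm
  -- show ∫ x in s, Z x ∂P = ∫ x in s, Y x ∂P
  refine ext_inner_left ℝ fun g => ?_
  have hgY : Integrable (fun ω => ⟪g, Y ω⟫) P := hY.const_inner g
  have h1 : ⟪g, ∫ x in s, Y x ∂P⟫ = ∫ x in s, ⟪g, Y x⟫ ∂P :=
    (integral_inner (hY.integrableOn (μ := P)) g).symm
  have h2 : ∫ x in s, (P[fun ω => ⟪g, Y ω⟫|m]) x ∂P = ∫ x in s, ⟪g, Y x⟫ ∂P :=
    setIntegral_condExp hm hgY hs
  have h3 : ∫ x in s, (P[fun ω => ⟪g, Y ω⟫|m]) x ∂P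
      = ∫ x in s, (⟪B₀ g, φ x - μX⟫ + ∫ ω', ⟪g, Y ω'⟫ ∂P) ∂P :=
    setIntegral_congr_ae (μ := P) (hm s hs) ((h g).mono fun x hx _ => hx)
  have hptwise : ∀ x, ⟪B₀ g, φ x - μX⟫ + ∫ ω', ⟪g, Y ω'⟫ ∂P = ⟪g, Z x⟫ := by
    intro x
    have : ⟪B₀ g, φ x - μX⟫ = ⟪g, A (φ x - μX)⟫ :=
      (ContinuousLinearMap.adjoint_inner_right B₀ g (φ x - μX)).symm
    rw [hZ]
    simp only [inner_add_right, this, integral_inner hY g]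
  have h4 : ∫ x in s, (⟪B₀ g, φ x - μX⟫ + ∫ ω', ⟪g, Y ω'⟫ ∂P) ∂P
      = ∫ x in s, ⟪g, Z x⟫ ∂P := by
    simp_rw [hptwise]
  have h5 : ∫ x in s, ⟪g, Z x⟫ ∂P = ⟪g, ∫ x in s, Z x ∂P⟫ :=
    integral_inner (hZint.integrableOn (μ := P)) g
  rw [h1, ← h2, h3, h4, h5]
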